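/- Let G be a finite connected weighted graph with positive edge weights x, and first Betti number b1. Let M be the |E⁺| × b1 integer matrix whose columns express an integral basis (γ_1,…,γ_{b1}) of the cycle group Z_1(G,ℤ) in the edge basis, and let C = diag(x_e : e ∈ E⁺). Then det(Mᵀ C^{−1} M) = Σ_{T spanning tree of G} Π_{e ∈ E⁺∖T} x_e^{−1}; equivalently, (Π_{e∈E⁺} x_e) · det(Mᵀ C^{−1} M) = Σ_T Π_{e∈T} x_e. -/

import Mathlib

/-! Framework: finite graph `(V, E, head, tail)`, chains `C₁(G,ℤ)` modeled as `E → ℤ`. -/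

section Graph

variable {V E : Type*} [Fintype V] [Fintype E] [DecidableEq V] [DecidableEq E]

/-- The boundary operator `∂ : C₁(G,ℤ) → C₀(G,ℤ)`; its kernel is the cycle group. -/
def bd (head tail : E → V) : (E → ℤ) →ₗ[ℤ] (V → ℤ) where
  toFun c := fun v => ∑ e, c e *
    ((if head e = v then 1 else 0) - (if tail e = v then 1 else 0))
  map_add' c d := by
    funext v
    simp [add_mul, Finset.sum_add_distrib]
  map_smul' r c := by
    funext v
    simp [Finset.mul_sum, mul_assoc]

/-- Two vertices are connected through the edges of `T`. -/
def Conn (head tail : E → V) (T : Finset E) (v w : V) : Prop :=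
  Relation.ReflTransGen
    (fun a b => ∃ e ∈ T, (head e = a ∧ tail e = b) ∨ (head e = b ∧ tail e = a)) v w

/-- `T` is a spanning tree. -/
def IsSpanningTree (head tail : E → V) (T : Finset E) : Prop :=
  T.card + 1 = Fintype.card V ∧ ∀ v w : V, Conn head tail T v w

end Graph

open Classical
set_option linter.unusedSectionVars false

/-! ### Auxiliary: Cauchy–Binet -/

section CB

variable {m n : Type*} [Fintype m] [Fintype n] [DecidableEq m] [DecidableEq n]

/-- A chosen enumeration of a finset `S` of cardinality `Fintype.card n` by `n`. -/
noncomputable def STenum (S : Finset m) (h : S.card = Fintype.card n) : n → m :=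
  fun i => ((Finset.equivFinOfCardEq h).symm (Fintype.equivFinOfCardEq rfl i) : m)

lemma STenum_inj (S : Finset m) (h : S.card = Fintype.card n) :
    Function.Injective (STenum (n := n) S h) := by
  intro a b hab
  have := Subtype.ext hab
  simpa using congrArg (Fintype.equivFinOfCardEq (rfl : Fintype.card n = _)).symm
    (congrArg (Finset.equivFinOfCardEq h) this)

lemma STenum_mem (S : Finset m) (h : S.card = Fintype.card n) (i : n) :
    STenum (n := n) S h i ∈ S := by
  exact ((Finset.equivFinOfCardEq h).symm _).2

lemma STenum_image (S : Finset m) (h : S.card = Fintype.card n) :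
    Finset.image (STenum (n := n) S h) Finset.univ = S := by
  apply Finset.eq_of_subset_of_card_le
  · intro x hx
    rcases Finset.mem_image.mp hx with ⟨i, _, rfl⟩
    exact STenum_mem S h i
  · rw [Finset.card_image_of_injective _ (STenum_inj S h), Finset.card_univ, h]

/-- The permutation comparing an injective `φ : n → m` with image `S` to `STenum S h`. -/
noncomputable def STperm (S : Finset m) (h : S.card = Fintype.card n) (φ : n → m)
    (hmem : ∀ x, φ x ∈ S) (hinj : Function.Injective φ) : Equiv.Perm n :=
  Equiv.ofBijective
    (fun x => (Fintype.equivFinOfCardEq (rfl : Fintype.card n = Fintype.card n)).symm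
      ((Finset.equivFinOfCardEq h) ⟨φ x, hmem x⟩))
    ((Finite.injective_iff_bijective).mp (fun a b hab => by
      have h1 : (⟨φ a, hmem a⟩ : {x // x ∈ S}) = ⟨φ b, hmem b⟩ := by
        apply (Finset.equivFinOfCardEq h).injective
        apply (Fintype.equivFinOfCardEq rfl).symm.injective
        exact hab
      exact hinj (congrArg Subtype.val h1)))

lemma STenum_STperm (S : Finset m) (h : S.card = Fintype.card n) (φ : n → m)
    (hmem : ∀ x, φ x ∈ S) (hinj : Function.Injective φ) (x : n) :
    STenum S h (STperm S h φ hmem hinj x) = φ x := by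
  simp [STperm, STenum, Equiv.ofBijective_apply, Equiv.apply_symm_apply, Equiv.symm_apply_apply]

theorem cauchy_binet (A B : Matrix m n ℝ) :
    (A.transpose * B).det = ∑ S : Finset m,
      if h : S.card = Fintype.card n then
        (A.submatrix (STenum S h) id).det * (B.submatrix (STenum S h) id).det
      else 0 := by
  classical
  have hdetsub : ∀ φ : n → m,
      (∑ σ : Equiv.Perm n, ((Equiv.Perm.sign σ : ℤ) : ℝ) * ∏ i, A (φ i) (σ i))
        = (A.submatrix φ id).det := by
    intro φ
    rw [← Matrix.det_transpose (A.submatrix φ id), Matrix.det_apply']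
    congr 1
  have step1 : (A.transpose * B).det
      = ∑ φ : n → m, (A.submatrix φ id).det * ∏ i, B (φ i) i := by
    calc (A.transpose * B).det
        = ∑ σ : Equiv.Perm n, ((Equiv.Perm.sign σ : ℤ) : ℝ) *
            ∏ i, ∑ e, A e (σ i) * B e i := by
          simp only [Matrix.det_apply', Matrix.mul_apply, Matrix.transpose_apply]
      _ = ∑ σ : Equiv.Perm n, ∑ φ : n → m, ((Equiv.Perm.sign σ : ℤ) : ℝ) *
            ∏ i, (A (φ i) (σ i) * B (φ i) i) := by
          simp only [Finset.prod_univ_sum, Fintype.piFinset_univ, Finset.mul_sum]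
      _ = ∑ φ : n → m, ∑ σ : Equiv.Perm n, ((Equiv.Perm.sign σ : ℤ) : ℝ) *
            ∏ i, (A (φ i) (σ i) * B (φ i) i) := Finset.sum_comm
      _ = ∑ φ : n → m, (A.submatrix φ id).det * ∏ i, B (φ i) i := by
          refine Finset.sum_congr rfl fun φ _ => ?_
          rw [← hdetsub φ, Finset.sum_mul]
          refine Finset.sum_congr rfl fun σ _ => ?_
          rw [Finset.prod_mul_distrib, mul_assoc]
  have hvanish : ∀ φ : n → m, ¬Function.Injective φ → (A.submatrix φ id).det = 0 := by
    intro φ hφ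
    rw [Function.not_injective_iff] at hφ
    obtain ⟨a, b, hab, hne⟩ := hφ
    exact Matrix.det_zero_of_row_eq hne (by funext j; simp [Matrix.submatrix_apply, hab])
  rw [step1]
  rw [← Finset.sum_filter_add_sum_filter_not Finset.univ (fun φ => Function.Injective φ)
    (fun φ => (A.submatrix φ id).det * ∏ i, B (φ i) i)]
  rw [show (∑ φ ∈ Finset.univ.filter (fun φ : n → m => ¬ Function.Injective φ),
      (A.submatrix φ id).det * ∏ i, B (φ i) i) = 0 from Finset.sum_eq_zero fun φ hφ => by
    rw [hvanish φ (Finset.mem_filter.mp hφ).2, zero_mul], add_zero]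
  rw [← Finset.sum_fiberwise_of_maps_to
    (g := fun φ : n → m => Finset.image φ Finset.univ)
    (fun φ _ => Finset.mem_univ _)
    (fun φ => (A.submatrix φ id).det * ∏ i, B (φ i) i)]
  refine Finset.sum_congr rfl fun S _ => ?_
  by_cases h : S.card = Fintype.card n
  · rw [dif_pos h]
    -- the fiber over S is in bijection with permutations
    have hmemS : ∀ φ : n → m, Finset.image φ Finset.univ = S → ∀ x, φ x ∈ S :=
      fun φ himg x => himg ▸ Finset.mem_image_of_mem φ (Finset.mem_univ x)
    have hbij : ∑ φ ∈ (Finset.univ.filter (fun φ : n → m => Function.Injective φ)).filter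
        (fun φ => Finset.image φ Finset.univ = S),
        (A.submatrix φ id).det * ∏ i, B (φ i) i
        = ∑ π : Equiv.Perm n,
            (A.submatrix (STenum S h ∘ π) id).det * ∏ i, B (STenum S h (π i)) i := by
      refine Finset.sum_bij'
        (i := fun φ hφ => STperm S h φ
          (hmemS φ (Finset.mem_filter.mp hφ).2)
          ((Finset.mem_filter.mp (Finset.mem_filter.mp hφ).1).2))
        (j := fun π _ => STenum S h ∘ π) ?_ ?_ ?_ ?_ ?_
      · intro φ hφ; exact Finset.mem_univ _
      · intro π _
        rw [Finset.mem_filter]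
        refine ⟨Finset.mem_filter.mpr ⟨Finset.mem_univ _,
          (STenum_inj S h).comp π.injective⟩, ?_⟩
        rw [show Finset.image (STenum S h ∘ ⇑π) Finset.univ
            = (Finset.univ.image ⇑π).image (STenum S h) from (Finset.image_image).symm,
          Finset.image_univ_equiv, STenum_image]
      · intro φ hφ
        funext x
        exact STenum_STperm S h φ _ _ x
      · intro π _
        ext x
        have := STenum_STperm S h (STenum S h ∘ π)
          (fun x => STenum_mem S h (π x)) ((STenum_inj S h).comp π.injective) x
        exact (STenum_inj S h) this
      · intro φ hφ
        have hx := STenum_STperm S h φ (hmemS φ (Finset.mem_filter.mp hφ).2)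
          ((Finset.mem_filter.mp (Finset.mem_filter.mp hφ).1).2)
        have hcomp : STenum S h ∘ (STperm S h φ (hmemS φ (Finset.mem_filter.mp hφ).2)
            ((Finset.mem_filter.mp (Finset.mem_filter.mp hφ).1).2)) = φ := funext hx
        rw [hcomp]
        exact congrArg _ (Finset.prod_congr rfl fun x _ => by rw [hx x])
    rw [hbij]
    have hperm : ∀ π : Equiv.Perm n,
        (A.submatrix (STenum S h ∘ π) id).det
          = ((Equiv.Perm.sign π : ℤ) : ℝ) * (A.submatrix (STenum S h) id).det := by
      intro π
      rw [show A.submatrix (STenum S h ∘ ⇑π) id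
          = (A.submatrix (STenum S h) id).submatrix ⇑π id by
        rw [Matrix.submatrix_submatrix]; rfl]
      exact Matrix.det_permute π _
    calc ∑ π : Equiv.Perm n,
        (A.submatrix (STenum S h ∘ π) id).det * ∏ i, B (STenum S h (π i)) i
        = (A.submatrix (STenum S h) id).det * ∑ π : Equiv.Perm n,
            ((Equiv.Perm.sign π : ℤ) : ℝ) * ∏ i, (B.submatrix (STenum S h) id) (π i) i := by
          rw [Finset.mul_sum]
          refine Finset.sum_congr rfl fun π _ => ?_
          rw [hperm π]
          simp only [Matrix.submatrix_apply, id_eq]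
          ring
      _ = (A.submatrix (STenum S h) id).det * (B.submatrix (STenum S h) id).det := by
          rw [← Matrix.det_apply']
  · rw [dif_neg h]
    apply Finset.sum_eq_zero
    intro φ hφ
    exfalso
    have hφ' := Finset.mem_filter.mp hφ
    have hinj := (Finset.mem_filter.mp hφ'.1).2
    apply h
    rw [← hφ'.2, Finset.card_image_of_injective _ hinj, Finset.card_univ]

end CB

/-! ### Graph lemmas -/

section GraphLemmas

variable {V E : Type*} [Fintype V] [Fintype E] [DecidableEq V] [DecidableEq E]
variable {head tail : E → V}

lemma conn_symm {T : Finset E} {v w : V} (h : Conn head tail T v w) :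
    Conn head tail T w v := by
  have hsymm : Symmetric (fun a b => ∃ e ∈ T,
      (head e = a ∧ tail e = b) ∨ (head e = b ∧ tail e = a)) := by
    rintro a b ⟨e, he, hc⟩
    exact ⟨e, he, hc.symm⟩
  haveI : Std.Symm (fun a b : V => ∃ e ∈ T,
      (head e = a ∧ tail e = b) ∨ (head e = b ∧ tail e = a)) := ⟨fun a b hab => hsymm hab⟩
  unfold Conn at h ⊢
  exact Std.Symm.symm _ _ h

lemma conn_trans {T : Finset E} {u v w : V} (h1 : Conn head tail T u v)
    (h2 : Conn head tail T v w) : Conn head tail T u w :=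
  Relation.ReflTransGen.trans h1 h2

end GraphLemmas

/-- Boundary operator over a general commutative ring (plain function). -/
def bdf (R : Type*) [CommRing R] {V E : Type*} [Fintype E] [DecidableEq V]
    (head tail : E → V) (c : E → R) : V → R :=
  fun v => ∑ e, c e * ((if head e = v then 1 else 0) - (if tail e = v then 1 else 0))

/-- Boundary operator over a general commutative ring. -/
def bdr (R : Type*) [CommRing R] {V E : Type*} [Fintype E] [DecidableEq V]
    (head tail : E → V) : (E → R) →ₗ[R] (V → R) where
  toFun := bdf R head tail
  map_add' c d := by
    funext v
    simp only [bdf, Pi.add_apply, add_mul, Finset.sum_add_distrib]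
  map_smul' r c := by
    funext v
    simp only [bdf, Pi.smul_apply, smul_eq_mul, RingHom.id_apply, Finset.mul_sum, mul_assoc]

lemma bdr_apply (R : Type*) [CommRing R] {V E : Type*} [Fintype E] [DecidableEq V]
    (head tail : E → V) (c : E → R) (v : V) :
    bdr R head tail c v =
      ∑ e, c e * ((if head e = v then 1 else 0) - (if tail e = v then 1 else 0)) := rfl

section GraphLemmas2
variable {V E : Type*} [Fintype V] [Fintype E] [DecidableEq V] [DecidableEq E]
variable {head tail : E → V}

lemma bd_eq_bdr_int (c : E → ℤ) : bd head tail c = bdr ℤ head tail c := rfl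

lemma bdr_cast (c : E → ℤ) :
    bdr ℝ head tail (fun e => (c e : ℝ)) = fun v => ((bd head tail c v : ℤ) : ℝ) := by
  funext v
  show (∑ e, (c e : ℝ) * ((if head e = v then 1 else 0) - (if tail e = v then 1 else 0)))
    = ((∑ e, c e * ((if head e = v then 1 else 0) - (if tail e = v then 1 else 0)) : ℤ) : ℝ)
  push_cast [apply_ite (fun z : ℤ => (z : ℝ))]
  rfl

lemma bdr_single (R : Type*) [CommRing R] (f : E) :
    bdr R head tail (fun e => if e = f then 1 else 0) =
      fun u => (if head f = u then (1 : R) else 0) - (if tail f = u then 1 else 0) := by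
  funext u
  rw [bdr_apply]
  rw [Finset.sum_eq_single f]
  · simp
  · intro e _ hne
    rw [if_neg hne, zero_mul]
  · intro h
    exact absurd (Finset.mem_univ f) h

/-- A path from `v` to `w` through `T` gives an integral chain supported on `T` with
boundary `δ_w - δ_v`. -/
lemma exists_path_chain {T : Finset E} {v w : V} (h : Conn head tail T v w) :
    ∃ c : E → ℤ, (∀ e ∉ T, c e = 0) ∧
      bdr ℤ head tail c =
        fun u => (if w = u then (1 : ℤ) else 0) - (if v = u then 1 else 0) := by
  unfold Conn at h
  induction h with
  | refl =>
    refine ⟨0, fun e _ => rfl, ?_⟩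
    rw [map_zero]
    funext u
    simp
  | tail hab hbc ih =>
    obtain ⟨c, hcsupp, hcbd⟩ := ih
    obtain ⟨e, heT, hcase⟩ := hbc
    rcases hcase with ⟨h1, h2⟩ | ⟨h1, h2⟩
    · -- head e = intermediate, tail e = final
      refine ⟨c - (fun f => if f = e then 1 else 0), ?_, ?_⟩
      · intro f hf
        have hfe : f ≠ e := fun hfe => hf (hfe ▸ heT)
        simp [hcsupp f hf, hfe]
      · rw [map_sub, hcbd, bdr_single]
        funext u
        rw [h1, h2]
        simp only [Pi.sub_apply]
        ring
    · -- head e = final, tail e = intermediate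
      refine ⟨c + (fun f => if f = e then 1 else 0), ?_, ?_⟩
      · intro f hf
        have hfe : f ≠ e := fun hfe => hf (hfe ▸ heT)
        simp [hcsupp f hf, hfe]
      · rw [map_add, hcbd, bdr_single]
        funext u
        rw [h1, h2]
        simp only [Pi.add_apply]
        ring

/-- Crossing edge lemma. -/
lemma exists_crossing_edge {A : Finset V} {a b : V}
    (h : Conn head tail Finset.univ a b) (ha : a ∈ A) (hb : b ∉ A) :
    ∃ e u u', u ∈ A ∧ u' ∉ A ∧
      ((head e = u ∧ tail e = u') ∨ (head e = u' ∧ tail e = u)) := by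
  unfold Conn at h
  revert hb
  induction h with
  | refl => intro hb; exact absurd ha hb
  | tail hab hbc ih =>
    intro hb
    obtain ⟨e, _, hcase⟩ := hbc
    rcases hcase with ⟨h1, h2⟩ | ⟨h1, h2⟩
    · by_cases hm : head e ∈ A
      · exact ⟨e, head e, tail e, hm, h2 ▸ hb, Or.inl ⟨rfl, rfl⟩⟩
      · exact ih (h1 ▸ hm)
    · by_cases hm : tail e ∈ A
      · exact ⟨e, tail e, head e, hm, h1 ▸ hb, Or.inr ⟨rfl, rfl⟩⟩
      · exact ih (h2 ▸ hm)

/-- A connected graph has a spanning tree. -/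
lemma exists_spanning_tree [Nonempty V]
    (hconn : ∀ v w : V, Conn head tail (Finset.univ : Finset E) v w) :
    ∃ T : Finset E, IsSpanningTree head tail T := by
  obtain ⟨v₀⟩ := ‹Nonempty V›
  have key : ∀ k : ℕ, k + 1 ≤ Fintype.card V → ∃ (T : Finset E) (A : Finset V),
      T.card = k ∧ A.card = k + 1 ∧ v₀ ∈ A ∧ (∀ e ∈ T, head e ∈ A ∧ tail e ∈ A) ∧
      (∀ v ∈ A, Conn head tail T v₀ v) := by
    intro k
    induction k with
    | zero =>
      intro _
      refine ⟨∅, {v₀}, by simp, by simp, by simp, by simp, ?_⟩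
      intro v hv
      rw [Finset.mem_singleton] at hv
      subst hv
      exact Relation.ReflTransGen.refl
    | succ k ih =>
      intro hk
      obtain ⟨T, A, hTc, hAc, hv₀, hend, hAconn⟩ := ih (by omega)
      obtain ⟨w, hw⟩ : ∃ w, w ∉ A := by
        by_contra hcon
        push_neg at hcon
        have : A = Finset.univ := Finset.eq_univ_iff_forall.mpr hcon
        rw [this, Finset.card_univ] at hAc
        omega
      obtain ⟨e, u, u', hu, hu', hor⟩ :=
        exists_crossing_edge (head := head) (tail := tail) (hconn v₀ w) hv₀ hw
      have heT : e ∉ T := by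
        intro heT
        rcases hor with ⟨h1, h2⟩ | ⟨h1, h2⟩
        · exact hu' (h2 ▸ (hend e heT).2)
        · exact hu' (h1 ▸ (hend e heT).1)
      have hmono : ∀ {a b : V}, Conn head tail T a b → Conn head tail (insert e T) a b :=
        fun h => by
          unfold Conn at h ⊢
          refine Relation.ReflTransGen.mono ?_ _ _ h
          rintro x y ⟨f, hf, hc⟩
          exact ⟨f, Finset.mem_insert_of_mem hf, hc⟩
      refine ⟨insert e T, insert u' A, ?_, ?_, Finset.mem_insert_of_mem hv₀, ?_, ?_⟩
      · rw [Finset.card_insert_of_notMem heT, hTc]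
      · rw [Finset.card_insert_of_notMem hu', hAc]
      · intro f hf
        rcases Finset.mem_insert.mp hf with rfl | hfT
        · rcases hor with ⟨h1, h2⟩ | ⟨h1, h2⟩
          · exact ⟨h1 ▸ Finset.mem_insert_of_mem hu, h2 ▸ Finset.mem_insert_self u' A⟩
          · exact ⟨h1 ▸ Finset.mem_insert_self u' A, h2 ▸ Finset.mem_insert_of_mem hu⟩
        · obtain ⟨ha, hb⟩ := hend f hfT
          exact ⟨Finset.mem_insert_of_mem ha, Finset.mem_insert_of_mem hb⟩
      · intro v hv
        have hstep : Conn head tail (insert e T) u u' :=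
          Relation.ReflTransGen.single ⟨e, Finset.mem_insert_self e T, hor⟩
        rcases Finset.mem_insert.mp hv with rfl | hvA
        · exact (hmono (hAconn u hu)).trans hstep
        · exact hmono (hAconn v hvA)
  have hVpos : 0 < Fintype.card V := Fintype.card_pos
  obtain ⟨T, A, hTc, hAc, hv₀, _, hAconn⟩ := key (Fintype.card V - 1) (by omega)
  have hAuniv : A = Finset.univ := by
    apply Finset.eq_univ_of_card
    rw [hAc]; omega
  refine ⟨T, ⟨by omega, ?_⟩⟩
  intro v w
  exact (conn_symm (hAconn v (hAuniv ▸ Finset.mem_univ v))).trans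
    (hAconn w (hAuniv ▸ Finset.mem_univ w))

/-- Bridge: the boundary of a chain supported on `T` equals the boundary of its
restriction to the subgraph with edge set `T`. -/
lemma bdr_restrict (T : Finset E) (c : E → ℝ) (hsupp : ∀ e ∉ T, c e = 0) :
    bdr ℝ (fun e : {e // e ∈ T} => head e.1) (fun e : {e // e ∈ T} => tail e.1)
      (fun e => c e.1) = bdr ℝ head tail c := by
  funext v
  rw [bdr_apply, bdr_apply]
  rw [← Finset.sum_subtype T (fun x => Iff.rfl)
    (fun e => c e * ((if head e = v then (1:ℝ) else 0) - (if tail e = v then 1 else 0)))]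
  exact Finset.sum_subset (Finset.subset_univ T)
    (fun e _ he => by rw [hsupp e he, zero_mul])

/-- A real cycle supported on a spanning tree is zero. -/
lemma tree_no_cycle_real {T : Finset E} (hcard : T.card + 1 = Fintype.card V)
    (hT : ∀ v w : V, Conn head tail T v w) (c : E → ℝ)
    (hsupp : ∀ e ∉ T, c e = 0) (hc : bdr ℝ head tail c = 0) : c = 0 := by
  classical
  have hVpos : 0 < Fintype.card V := by omega
  obtain ⟨v₀⟩ : Nonempty V := Fintype.card_pos_iff.mp hVpos
  set φ : ({e // e ∈ T} → ℝ) →ₗ[ℝ] (V → ℝ) :=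
    bdr ℝ (fun e : {e // e ∈ T} => head e.1) (fun e : {e // e ∈ T} => tail e.1) with hφ
  -- difference vectors lie in the range of φ
  have hmem : ∀ v : V, (fun u => (if v = u then (1:ℝ) else 0) - (if v₀ = u then 1 else 0))
      ∈ LinearMap.range φ := by
    intro v
    obtain ⟨p, hp_supp, hp_bd⟩ := exists_path_chain (head := head) (tail := tail) (hT v₀ v)
    have hsupp' : ∀ e ∉ T, ((p e : ℝ)) = 0 := fun e he => by rw [hp_supp e he]; norm_num
    refine ⟨fun e => (p e.1 : ℝ), ?_⟩
    rw [hφ, bdr_restrict T _ hsupp', bdr_cast]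
    funext u
    rw [bd_eq_bdr_int, hp_bd]
    push_cast [apply_ite (fun z : ℤ => (z : ℝ))]
    rfl
  -- an independent family of size card V - 1 inside the range
  set F : {u : V // u ≠ v₀} → (V → ℝ) :=
    fun u => fun w => (if u.1 = w then (1:ℝ) else 0) - (if v₀ = w then 1 else 0) with hF
  have hFindep : LinearIndependent ℝ F := by
    rw [Fintype.linearIndependent_iff]
    intro g hg u
    have hgu := congrFun hg u.1
    simp only [Finset.sum_apply, Pi.zero_apply, Pi.smul_apply, smul_eq_mul, hF] at hgu
    rw [Finset.sum_congr rfl (fun u' _ => show g u' * ((if u'.1 = u.1 then (1:ℝ) else 0) -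
        (if v₀ = u.1 then 1 else 0)) = if u'.1 = u.1 then g u' else 0 by
      rw [if_neg (show ¬ (v₀ = (u : V)) from fun hcon => u.2 hcon.symm)]
      by_cases hcase : u'.1 = u.1 <;> simp [hcase])] at hgu
    rw [Finset.sum_eq_single u (fun u' _ hne => by
        rw [if_neg (fun hcon => hne (Subtype.ext hcon))])
      (fun hcon => absurd (Finset.mem_univ u) hcon)] at hgu
    rw [if_pos rfl] at hgu
    exact hgu
  have hF' : LinearIndependent ℝ (fun u : {u : V // u ≠ v₀} =>
      (⟨F u, hmem u.1⟩ : LinearMap.range φ)) := by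
    apply LinearIndependent.of_comp (LinearMap.range φ).subtype
    exact hFindep
  have hcard1 : Fintype.card {u : V // u ≠ v₀} ≤ Module.finrank ℝ (LinearMap.range φ) :=
    hF'.fintype_card_le_finrank
  have hcardsub : Fintype.card {u : V // u ≠ v₀} = Fintype.card V - 1 := by
    simp [Fintype.card_subtype_compl]
  have hrank := LinearMap.finrank_range_add_finrank_ker φ
  have hdom : Module.finrank ℝ ({e // e ∈ T} → ℝ) = T.card := by
    rw [Module.finrank_pi]; exact Fintype.card_coe T
  rw [hdom] at hrank
  have hker : LinearMap.ker φ = ⊥ := by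
    apply Submodule.finrank_eq_zero.mp
    omega
  have hrestr : φ (fun e => c e.1) = 0 := by
    rw [hφ, bdr_restrict T c hsupp, hc]
  have hzero : (fun e : {e // e ∈ T} => c e.1) = 0 := by
    have hmem' := LinearMap.mem_ker.mpr hrestr
    rw [hker, Submodule.mem_bot] at hmem'
    exact hmem'
  funext e
  by_cases he : e ∈ T
  · exact congrFun hzero ⟨e, he⟩
  · exact hsupp e he

/-- An integral cycle supported on a spanning tree is zero. -/
lemma tree_no_cycle_int {T : Finset E} (hcard : T.card + 1 = Fintype.card V)
    (hT : ∀ v w : V, Conn head tail T v w) (c : E → ℤ)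
    (hsupp : ∀ e ∉ T, c e = 0) (hc : bd head tail c = 0) : c = 0 := by
  have hreal : (fun e => (c e : ℝ)) = 0 := by
    apply tree_no_cycle_real hcard hT
    · intro e he; rw [hsupp e he]; norm_num
    · rw [bdr_cast, hc]; funext v; simp
  funext e
  have := congrFun hreal e
  simpa using this

/-- If `T` has the size of a spanning tree but is not connected, there is a nonzero
real cycle supported on `T`. -/
lemma exists_cycle_of_not_conn {T : Finset E} (hcard : T.card + 1 = Fintype.card V)
    (hT : ¬ ∀ v w : V, Conn head tail T v w) :
    ∃ c : E → ℝ, c ≠ 0 ∧ (∀ e ∉ T, c e = 0) ∧ bdr ℝ head tail c = 0 := by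
  classical
  push_neg at hT
  obtain ⟨v, w, hvw⟩ := hT
  letI : DecidablePred (fun u => Conn head tail T v u) := Classical.decPred _
  set A : Finset V := Finset.univ.filter (fun u => Conn head tail T v u) with hA
  have hvA : v ∈ A := Finset.mem_filter.mpr ⟨Finset.mem_univ v, Relation.ReflTransGen.refl⟩
  have hwA : w ∉ A := fun h => hvw (Finset.mem_filter.mp h).2
  have hiff : ∀ e ∈ T, (head e ∈ A ↔ tail e ∈ A) := by
    intro e he
    simp only [hA, Finset.mem_filter, Finset.mem_univ, true_and]
    constructor
    · intro h; exact h.trans (Relation.ReflTransGen.single ⟨e, he, Or.inl ⟨rfl, rfl⟩⟩)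
    · intro h; exact h.trans (Relation.ReflTransGen.single ⟨e, he, Or.inr ⟨rfl, rfl⟩⟩)
  set φ : ({e // e ∈ T} → ℝ) →ₗ[ℝ] (V → ℝ) :=
    bdr ℝ (fun e : {e // e ∈ T} => head e.1) (fun e : {e // e ∈ T} => tail e.1) with hφ
  set ψ : (V → ℝ) →ₗ[ℝ] (Fin 2 → ℝ) :=
    { toFun := fun f j => ∑ u ∈ (if j = 0 then A else Aᶜ), f u
      map_add' := by intro f g; funext j; simp [Finset.sum_add_distrib]
      map_smul' := by intro r f; funext j; simp [Finset.mul_sum] } with hψ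
  have hψsurj : LinearMap.range ψ = ⊤ := by
    rw [LinearMap.range_eq_top]
    intro y
    refine ⟨(fun u => y 0 * (if v = u then 1 else 0) + y 1 * (if w = u then 1 else 0)), ?_⟩
    funext j
    show (∑ u ∈ (if j = 0 then A else Aᶜ),
      (y 0 * (if v = u then 1 else 0) + y 1 * (if w = u then 1 else 0))) = y j
    fin_cases j
    · simp [Finset.sum_add_distrib, mul_ite, hvA, hwA]
    · simp [Finset.sum_add_distrib, mul_ite, Finset.mem_compl, hvA, hwA]
  have hrangeψ : Module.finrank ℝ (LinearMap.range ψ) = 2 := by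
    rw [hψsurj, finrank_top, Module.finrank_pi, Fintype.card_fin]
  have hrkψ := LinearMap.finrank_range_add_finrank_ker ψ
  rw [hrangeψ, Module.finrank_pi] at hrkψ
  have hsub : LinearMap.range φ ≤ LinearMap.ker ψ := by
    rintro f ⟨c', rfl⟩
    rw [LinearMap.mem_ker]
    funext j
    show (∑ u ∈ (if j = 0 then A else Aᶜ), φ c' u) = 0
    have hφapp : ∀ u, φ c' u = ∑ e : {e // e ∈ T},
        c' e * ((if head e.1 = u then (1:ℝ) else 0) - (if tail e.1 = u then 1 else 0)) :=
      fun u => rfl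
    rw [Finset.sum_congr rfl (fun u _ => hφapp u), Finset.sum_comm]
    apply Finset.sum_eq_zero
    intro e _
    rw [← Finset.mul_sum, Finset.sum_sub_distrib, Finset.sum_ite_eq, Finset.sum_ite_eq]
    have hiffe := hiff e.1 e.2
    by_cases hj : j = 0
    · rw [if_pos hj]
      by_cases hh : head e.1 ∈ A
      · rw [if_pos hh, if_pos (hiffe.mp hh), sub_self, mul_zero]
      · rw [if_neg hh, if_neg (fun hcon => hh (hiffe.mpr hcon)), sub_self, mul_zero]
    · rw [if_neg hj]
      by_cases hh : head e.1 ∈ A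
      · rw [if_neg (by simpa using hh),
          if_neg (by simpa using hiffe.mp hh), sub_self, mul_zero]
      · rw [if_pos (by simpa using hh),
          if_pos (by rw [Finset.mem_compl]; exact fun hcon => hh (hiffe.mpr hcon)),
          sub_self, mul_zero]
  have hmono : Module.finrank ℝ (LinearMap.range φ) ≤ Module.finrank ℝ (LinearMap.ker ψ) :=
    Submodule.finrank_mono hsub
  have hrkφ := LinearMap.finrank_range_add_finrank_ker φ
  have hdom : Module.finrank ℝ ({e // e ∈ T} → ℝ) = T.card := by
    rw [Module.finrank_pi]; exact Fintype.card_coe T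
  rw [hdom] at hrkφ
  have hVge : 2 ≤ Fintype.card V := by
    by_contra hcon
    push_neg at hcon
    have hsub : Subsingleton V := Fintype.card_le_one_iff_subsingleton.mp (by omega)
    have hvweq : v = w := Subsingleton.elim v w
    rw [hvweq] at hvw
    exact hvw Relation.ReflTransGen.refl
  have hkerφpos : 0 < Module.finrank ℝ (LinearMap.ker φ) := by omega
  have hkerφne : LinearMap.ker φ ≠ ⊥ := by
    intro hcon
    rw [hcon] at hkerφpos
    simp [finrank_bot] at hkerφpos
  obtain ⟨c', hc'mem, hc'ne⟩ := (Submodule.ne_bot_iff _).mp hkerφne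
  refine ⟨fun e => if he : e ∈ T then c' ⟨e, he⟩ else 0, ?_, ?_, ?_⟩
  · intro h0
    apply hc'ne
    funext e
    have := congrFun h0 e.1
    simp only [dif_pos e.2] at this
    simpa using this
  · intro e he
    exact dif_neg he
  · have hsupp : ∀ e ∉ T, (if he : e ∈ T then c' ⟨e, he⟩ else (0:ℝ)) = 0 :=
      fun e he => dif_neg he
    rw [← bdr_restrict T _ hsupp]
    have heq : (fun e : {e // e ∈ T} =>
        if he : e.1 ∈ T then c' ⟨e.1, he⟩ else (0:ℝ)) = c' := by
      funext e
      exact dif_pos e.2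
    rw [heq]
    exact LinearMap.mem_ker.mp hc'mem

/-- Fundamental cycles of a connected edge set. -/
lemma exists_fund_cycle {T : Finset E} (hT : ∀ v w : V, Conn head tail T v w) (f : E) :
    ∃ g : E → ℤ, bd head tail g = 0 ∧ ∀ e ∉ T, g e = (if e = f then 1 else 0) := by
  obtain ⟨p, hps, hpb⟩ := exists_path_chain (head := head) (tail := tail) (hT (head f) (tail f))
  refine ⟨(fun e => if e = f then 1 else 0) + p, ?_, ?_⟩
  · rw [bd_eq_bdr_int, map_add, bdr_single, hpb]
    funext u
    simp only [Pi.add_apply, Pi.zero_apply]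
    ring
  · intro e he
    simp [Pi.add_apply, hps e he]

lemma cycle_decomp_int {T : Finset E} (hcard : T.card + 1 = Fintype.card V)
    (hT : ∀ v w : V, Conn head tail T v w) (g : E → (E → ℤ))
    (hg0 : ∀ f, bd head tail (g f) = 0)
    (hg1 : ∀ f e, e ∉ T → g f e = if e = f then 1 else 0)
    (z : E → ℤ) (hz : bd head tail z = 0) :
    z = ∑ f ∈ Tᶜ, z f • g f := by
  have hsub : ∀ e ∉ T, (z - ∑ f ∈ Tᶜ, z f • g f) e = 0 := by
    intro e he
    simp only [Pi.sub_apply, Finset.sum_apply, Pi.smul_apply, smul_eq_mul]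
    rw [Finset.sum_congr rfl (fun f _ => show z f * g f e = if e = f then z f else 0 by
      rw [hg1 f e he]; by_cases hc : e = f <;> simp [hc])]
    rw [Finset.sum_ite_eq, if_pos (Finset.mem_compl.mpr he), sub_self]
  have hbd : bd head tail (z - ∑ f ∈ Tᶜ, z f • g f) = 0 := by
    rw [map_sub, hz, map_sum]
    simp only [map_smul, hg0, smul_zero, Finset.sum_const_zero, sub_zero]
  have := tree_no_cycle_int hcard hT _ hsub hbd
  exact sub_eq_zero.mp this

lemma cycle_decomp_real {T : Finset E} (hcard : T.card + 1 = Fintype.card V)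
    (hT : ∀ v w : V, Conn head tail T v w) (g : E → (E → ℤ))
    (hg0 : ∀ f, bd head tail (g f) = 0)
    (hg1 : ∀ f e, e ∉ T → g f e = if e = f then 1 else 0)
    (c : E → ℝ) (hc : bdr ℝ head tail c = 0) :
    c = ∑ f ∈ Tᶜ, c f • (fun e => ((g f e : ℤ) : ℝ)) := by
  have hgr : ∀ f, bdr ℝ head tail (fun e => ((g f e : ℤ) : ℝ)) = 0 := by
    intro f
    rw [bdr_cast]
    funext v
    have := congrFun (hg0 f) v
    simp only [Pi.zero_apply] at this ⊢
    rw [this]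
    norm_num
  have hsub : ∀ e ∉ T, (c - ∑ f ∈ Tᶜ, c f • (fun e => ((g f e : ℤ) : ℝ))) e = 0 := by
    intro e he
    simp only [Pi.sub_apply, Finset.sum_apply, Pi.smul_apply, smul_eq_mul]
    rw [Finset.sum_congr rfl (fun f _ =>
      show c f * ((g f e : ℤ) : ℝ) = if e = f then c f else 0 by
        rw [hg1 f e he]; by_cases hc' : e = f <;> simp [hc'])]
    rw [Finset.sum_ite_eq, if_pos (Finset.mem_compl.mpr he), sub_self]
  have hbd : bdr ℝ head tail (c - ∑ f ∈ Tᶜ, c f • (fun e => ((g f e : ℤ) : ℝ))) = 0 := by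
    rw [map_sub, hc, map_sum]
    simp only [map_smul, hgr, smul_zero, Finset.sum_const_zero, sub_zero]
  have := tree_no_cycle_real hcard hT _ hsub hbd
  exact sub_eq_zero.mp this

/-- The squared minor of the cycle matrix. -/
lemma minor_det {b₁ : ℕ}
    (hb₁ : b₁ + Fintype.card V = Fintype.card E + 1)
    (γ : Fin b₁ → (E → ℤ)) (hγ_indep : LinearIndependent ℤ γ)
    (hγ_span : Submodule.span ℤ (Set.range γ) = LinearMap.ker (bd head tail))
    (M : Matrix E (Fin b₁) ℝ) (hM : ∀ e i, M e i = (γ i e : ℝ))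
    (T₀ : Finset E) (hT₀ : IsSpanningTree head tail T₀)
    (S : Finset E) (h : S.card = Fintype.card (Fin b₁)) :
    (M.submatrix (STenum S h) id).det * (M.submatrix (STenum S h) id).det
      = if IsSpanningTree head tail Sᶜ then 1 else 0 := by
  classical
  have hScard : S.card = b₁ := by rw [h, Fintype.card_fin]
  have hTcard : Sᶜ.card + 1 = Fintype.card V := by
    have := Finset.card_add_card_compl S
    omega
  by_cases hST : IsSpanningTree head tail Sᶜ
  · rw [if_pos hST]
    choose g hg0 hg1 using fun f => exists_fund_cycle (T := Sᶜ) hST.2 f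
    have hγker : ∀ i, bd head tail (γ i) = 0 := by
      intro i
      have hmem : γ i ∈ Submodule.span ℤ (Set.range γ) :=
        Submodule.subset_span (Set.mem_range_self i)
      rw [hγ_span] at hmem
      exact LinearMap.mem_ker.mp hmem
    have hdecomp : ∀ i, γ i = ∑ f ∈ S, γ i f • g f := by
      intro i
      have := cycle_decomp_int hTcard hST.2 g hg0 hg1 (γ i) (hγker i)
      rwa [compl_compl] at this
    have hGmem : ∀ j : Fin b₁, g (STenum S h j) ∈ Submodule.span ℤ (Set.range γ) := by
      intro j
      rw [hγ_span]
      exact LinearMap.mem_ker.mpr (hg0 _)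
    choose C hC using fun j => (Submodule.mem_span_range_iff_exists_fun ℤ).mp (hGmem j)
    have hdecomp' : ∀ i, γ i = ∑ j : Fin b₁, γ i (STenum S h j) • g (STenum S h j) := by
      intro i
      calc γ i = ∑ f ∈ S, γ i f • g f := hdecomp i
        _ = ∑ f ∈ Finset.image (STenum S h) Finset.univ, γ i f • g f := by
            rw [STenum_image]
        _ = ∑ j : Fin b₁, γ i (STenum S h j) • g (STenum S h j) :=
            Finset.sum_image (fun a _ b _ hab => STenum_inj S h hab)
    have hdelta : ∀ i k, (∑ j, γ i (STenum S h j) * C j k) = if k = i then 1 else 0 := by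
      intro i k
      have e1 : ∑ k' : Fin b₁, (∑ j : Fin b₁, γ i (STenum S h j) * C j k') • γ k' = γ i := by
        calc ∑ k' : Fin b₁, (∑ j : Fin b₁, γ i (STenum S h j) * C j k') • γ k'
            = ∑ k' : Fin b₁, ∑ j : Fin b₁, (γ i (STenum S h j) * C j k') • γ k' :=
              Finset.sum_congr rfl fun k' _ => Finset.sum_smul
          _ = ∑ j : Fin b₁, ∑ k' : Fin b₁, (γ i (STenum S h j) * C j k') • γ k' :=
              Finset.sum_comm
          _ = ∑ j : Fin b₁, γ i (STenum S h j) • g (STenum S h j) := by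
              refine Finset.sum_congr rfl fun j _ => ?_
              rw [← hC j, Finset.smul_sum]
              exact Finset.sum_congr rfl fun k' _ => (smul_smul _ _ _).symm
          _ = γ i := (hdecomp' i).symm
      have e2 : ∑ k' : Fin b₁, (if k' = i then (1:ℤ) else 0) • γ k' = γ i := by
        rw [Finset.sum_congr rfl (fun k' (_ : k' ∈ Finset.univ) =>
          show (if k' = i then (1:ℤ) else 0) • γ k' = if k' = i then γ k' else 0 by
            by_cases hk : k' = i <;> simp [hk])]
        simp
      have hsum0 : ∑ k' : Fin b₁, ((∑ j : Fin b₁, γ i (STenum S h j) * C j k')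
          - (if k' = i then 1 else 0)) • γ k' = 0 := by
        rw [Finset.sum_congr rfl (fun k' _ => sub_smul _ _ (γ k')),
          Finset.sum_sub_distrib, e1, e2, sub_self]
      have := Fintype.linearIndependent_iff.mp hγ_indep _ hsum0 k
      exact sub_eq_zero.mp this
    set Zm : Matrix (Fin b₁) (Fin b₁) ℤ := Matrix.of (fun j i => γ i (STenum S h j)) with hZm
    set Cm : Matrix (Fin b₁) (Fin b₁) ℤ := Matrix.of (fun j k => C j k) with hCm
    have hmul : Zm.transpose * Cm = 1 := by
      ext i k
      rw [Matrix.mul_apply]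
      simp only [Matrix.transpose_apply, hZm, hCm, Matrix.of_apply]
      rw [hdelta i k, Matrix.one_apply]
      by_cases hik : i = k
      · simp [hik]
      · rw [if_neg (fun hc : k = i => hik hc.symm), if_neg hik]
    have hdet : Zm.det * Cm.det = 1 := by
      have hd := congrArg Matrix.det hmul
      rwa [Matrix.det_mul, Matrix.det_transpose, Matrix.det_one] at hd
    have hunit : Zm.det = 1 ∨ Zm.det = -1 := Int.isUnit_iff.mp (IsUnit.of_mul_eq_one _ hdet)
    have hsubm : M.submatrix (STenum S h) id = Zm.map (Int.cast : ℤ → ℝ) := by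
      ext j i
      simp [hM, hZm]
    have hdetcast : (M.submatrix (STenum S h) id).det = ((Zm.det : ℤ) : ℝ) := by
      rw [hsubm]
      exact (RingHom.map_det (Int.castRingHom ℝ) Zm).symm
    rw [hdetcast]
    rcases hunit with h1 | h1 <;> rw [h1] <;> norm_num
  · rw [if_neg hST]
    have hnotconn : ¬ ∀ v w : V, Conn head tail Sᶜ v w := fun hcon => hST ⟨hTcard, hcon⟩
    obtain ⟨c, hcne, hcsupp, hcbd⟩ := exists_cycle_of_not_conn hTcard hnotconn
    choose g0 hg00 hg01 using fun f => exists_fund_cycle (T := T₀) hT₀.2 f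
    have hdec := cycle_decomp_real hT₀.1 hT₀.2 g0 hg00 hg01 c hcbd
    have hmemspan : c ∈ Submodule.span ℝ
        (Set.range (fun i => fun e => ((γ i e : ℤ) : ℝ))) := by
      rw [hdec]
      apply Submodule.sum_mem
      intro f _
      apply Submodule.smul_mem
      have hg0mem : g0 f ∈ Submodule.span ℤ (Set.range γ) := by
        rw [hγ_span]
        exact LinearMap.mem_ker.mpr (hg00 f)
      obtain ⟨a, ha⟩ := (Submodule.mem_span_range_iff_exists_fun ℤ).mp hg0mem
      have hcast : (fun e => ((g0 f e : ℤ) : ℝ))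
          = ∑ i, ((a i : ℤ) : ℝ) • (fun e => ((γ i e : ℤ) : ℝ)) := by
        funext e
        have := congrFun ha e
        simp only [Finset.sum_apply, Pi.smul_apply, smul_eq_mul] at this
        rw [← this]
        push_cast
        simp
      rw [hcast]
      apply Submodule.sum_mem
      intro i _
      exact Submodule.smul_mem _ _ (Submodule.subset_span (Set.mem_range_self i))
    obtain ⟨a, ha⟩ := (Submodule.mem_span_range_iff_exists_fun ℝ).mp hmemspan
    have hane : a ≠ 0 := by
      rintro rfl
      apply hcne
      rw [← ha]
      simp
    have hmv : (M.submatrix (STenum S h) id).mulVec a = 0 := by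
      funext j
      show ∑ i, M.submatrix (STenum S h) id j i * a i = 0
      have hce := congrFun ha (STenum S h j)
      simp only [Finset.sum_apply, Pi.smul_apply, smul_eq_mul] at hce
      have hzero : c (STenum S h j) = 0 := by
        apply hcsupp
        rw [Finset.mem_compl, not_not]
        exact STenum_mem S h j
      rw [hzero] at hce
      rw [← hce]
      refine Finset.sum_congr rfl fun i _ => ?_
      rw [Matrix.submatrix_apply, id_eq, hM]
      ring
    have hdet0 : (M.submatrix (STenum S h) id).det = 0 :=
      Matrix.exists_mulVec_eq_zero_iff.mp ⟨a, hane, hmv⟩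
    rw [hdet0, mul_zero]

end GraphLemmas2

/-- **The matrix-cycle form of the matrix-tree theorem (first Symanzik polynomial).**
Let `M` be the `|E⁺| × b₁` matrix of an integral basis `(γ₁,…,γ_{b₁})` of the cycle
group `Z₁(G,ℤ)` in the edge basis and `C = diag(x_e)`.  Then
`det(Mᵀ C⁻¹ M) = Σ_{T spanning tree} Π_{e ∉ T} x_e⁻¹`, and equivalently
`(Π_e x_e) · det(Mᵀ C⁻¹ M) = Σ_T Π_{e ∈ T} x_e`. -/
theorem symanzik_matrix_tree
    {V E : Type*} [Fintype V] [Fintype E] [DecidableEq V] [DecidableEq E]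
    (head tail : E → V)
    (hconn : ∀ v w : V, Conn head tail (Finset.univ : Finset E) v w)
    (x : E → ℝ) (hx : ∀ e, 0 < x e)
    (b₁ : ℕ) (hb₁ : b₁ + Fintype.card V = Fintype.card E + 1)
    (γ : Fin b₁ → (E → ℤ))
    (hγ_indep : LinearIndependent ℤ γ)
    (hγ_span : Submodule.span ℤ (Set.range γ) = LinearMap.ker (bd head tail))
    (M : Matrix E (Fin b₁) ℝ) (hM : ∀ e i, M e i = (γ i e : ℝ)) :
    (M.transpose * (Matrix.diagonal x)⁻¹ * M).det =
        (∑ T : Finset E,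
          if IsSpanningTree head tail T then ∏ e ∈ Tᶜ, (x e)⁻¹ else 0) ∧
    (∏ e : E, x e) * (M.transpose * (Matrix.diagonal x)⁻¹ * M).det =
        ∑ T : Finset E,
          if IsSpanningTree head tail T then ∏ e ∈ T, x e else 0 := by
  classical
  have hVne : Nonempty V := by
    by_contra hcon
    haveI : IsEmpty V := not_nonempty_iff.mp hcon
    haveI : IsEmpty E := ⟨fun e => IsEmpty.false (head e)⟩
    have hcV : Fintype.card V = 0 := Fintype.card_eq_zero
    have hcE : Fintype.card E = 0 := Fintype.card_eq_zero
    have hzero : ∑ i, (1:ℤ) • γ i = 0 := by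
      apply funext
      intro e
      exact (IsEmpty.false e).elim
    have := Fintype.linearIndependent_iff.mp hγ_indep (fun _ => 1) hzero ⟨0, by omega⟩
    norm_num at this
  obtain ⟨T₀, hT₀⟩ := exists_spanning_tree (head := head) (tail := tail) hconn
  have hinv : (Matrix.diagonal x)⁻¹ = Matrix.diagonal (fun e => (x e)⁻¹) := by
    apply Matrix.inv_eq_right_inv
    rw [Matrix.diagonal_mul_diagonal]
    rw [show (fun e => x e * (x e)⁻¹) = fun _ => (1:ℝ) from
      funext fun e => mul_inv_cancel₀ (hx e).ne']
    exact Matrix.diagonal_one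
  have key : (M.transpose * (Matrix.diagonal x)⁻¹ * M).det =
      ∑ T : Finset E, if IsSpanningTree head tail T then ∏ e ∈ Tᶜ, (x e)⁻¹ else 0 := by
    rw [hinv, Matrix.mul_assoc, cauchy_binet]
    have hterm : ∀ S : Finset E,
        (if h : S.card = Fintype.card (Fin b₁) then
          (M.submatrix (STenum S h) id).det *
          ((Matrix.diagonal (fun e => (x e)⁻¹) * M).submatrix (STenum S h) id).det else 0)
        = if IsSpanningTree head tail Sᶜ then ∏ e ∈ S, (x e)⁻¹ else 0 := by
      intro S
      by_cases h : S.card = Fintype.card (Fin b₁)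
      · rw [dif_pos h]
        have hDsub : (Matrix.diagonal (fun e => (x e)⁻¹) * M).submatrix (STenum S h) id
            = Matrix.of (fun j i =>
                (x (STenum S h j))⁻¹ * (M.submatrix (STenum S h) id) j i) := by
          ext j i
          simp [Matrix.submatrix_apply, Matrix.diagonal_mul]
        rw [hDsub, Matrix.det_mul_column]
        have hprod : ∏ j : Fin b₁, (x (STenum S h j))⁻¹ = ∏ e ∈ S, (x e)⁻¹ := by
          have hpi := Finset.prod_image (s := Finset.univ) (f := fun e => (x e)⁻¹)
            (g := STenum S h) (fun a _ b _ hab => STenum_inj S h hab)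
          rw [STenum_image] at hpi
          exact hpi.symm
        rw [hprod]
        have hm := minor_det hb₁ γ hγ_indep hγ_span M hM T₀ hT₀ S h
        rw [show (M.submatrix (STenum S h) id).det * ((∏ e ∈ S, (x e)⁻¹) *
            (M.submatrix (STenum S h) id).det) = ((M.submatrix (STenum S h) id).det *
            (M.submatrix (STenum S h) id).det) * ∏ e ∈ S, (x e)⁻¹ from by ring, hm]
        by_cases hST : IsSpanningTree head tail Sᶜ
        · rw [if_pos hST, if_pos hST, one_mul]
        · rw [if_neg hST, if_neg hST, zero_mul]
      · rw [dif_neg h]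
        have hnST : ¬ IsSpanningTree head tail Sᶜ := by
          intro hST
          apply h
          have h1 := hST.1
          have h2 := Finset.card_add_card_compl S
          rw [Fintype.card_fin]
          omega
        rw [if_neg hnST]
    rw [Finset.sum_congr rfl (fun S _ => hterm S)]
    refine Fintype.sum_bijective compl compl_involutive.bijective _ _ (fun S => ?_)
    rw [compl_compl]
  refine ⟨key, ?_⟩
  rw [key, Finset.mul_sum]
  refine Finset.sum_congr rfl fun T _ => ?_
  by_cases hT : IsSpanningTree head tail T
  · rw [if_pos hT, if_pos hT]
    have hsplit : (∏ e : E, x e) = (∏ e ∈ T, x e) * ∏ e ∈ Tᶜ, x e :=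
      (Finset.prod_mul_prod_compl T x).symm
    rw [hsplit, mul_assoc, ← Finset.prod_mul_distrib]
    rw [show (∏ e ∈ Tᶜ, (x e * (x e)⁻¹)) = 1 from
      Finset.prod_eq_one fun e _ => mul_inv_cancel₀ (hx e).ne', mul_one]
  · rw [if_neg hT, if_neg hT, mul_zero]
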